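/- Let X be a CC space and φ : X → ℝ a midpoint convex, lower semicontinuous function. Then φ(Kx) ≤ φ(x) for every x ∈ X, where K is the convexification operator. -/

import Mathlib

open scoped BigOperators
open Filter MeasureTheory

/-- A convex combination space (Terán–Molchanov): a metric space with an
`n`-ary convex combination operation for positive weights summing to `1`. -/
structure CCSpace (X : Type) [MetricSpace X] where
  /-- the convex combination operation `[w 0, u 0; …; w (n-1), u (n-1)]` -/
  comb : ∀ {n : ℕ}, (Fin n → ℝ) → (Fin n → X) → X
  /-- the convexification operator -/
  K : X → X
  comb_single : ∀ u : X, comb (fun _ : Fin 1 => (1 : ℝ)) (fun _ => u) = u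
  /-- (CC.i) commutativity -/
  comb_perm : ∀ {n : ℕ} (w : Fin n → ℝ) (u : Fin n → X) (σ : Equiv.Perm (Fin n)),
    (∀ i, 0 < w i) → (∑ i, w i) = 1 → comb w u = comb (w ∘ σ) (u ∘ σ)
  /-- (CC.ii) associativity: the last two terms may be combined first -/
  comb_assoc : ∀ {n : ℕ} (w : Fin (n + 2) → ℝ) (u : Fin (n + 2) → X),
    (∀ i, 0 < w i) → (∑ i, w i) = 1 →
    comb w u =
      comb
        (Fin.snoc (fun i : Fin n => w (Fin.castLE (by omega) i))
          (w ⟨n, by omega⟩ + w ⟨n + 1, by omega⟩))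
        (Fin.snoc (fun i : Fin n => u (Fin.castLE (by omega) i))
          (comb
            ![w ⟨n, by omega⟩ / (w ⟨n, by omega⟩ + w ⟨n + 1, by omega⟩),
              w ⟨n + 1, by omega⟩ / (w ⟨n, by omega⟩ + w ⟨n + 1, by omega⟩)]
            ![u ⟨n, by omega⟩, u ⟨n + 1, by omega⟩]))
  /-- (CC.iii) continuity in the weight -/
  comb_cont : ∀ u v : X,
    ContinuousOn (fun t : ℝ => comb ![t, 1 - t] ![u, v]) (Set.Ioo (0 : ℝ) 1)
  /-- (CC.iv) negative curvature -/
  comb_nc : ∀ {n : ℕ} (w : Fin n → ℝ) (u v : Fin n → X),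
    (∀ i, 0 < w i) → (∑ i, w i) = 1 →
    dist (comb w u) (comb w v) ≤ ∑ i, w i * dist (u i) (v i)
  /-- (CC.v) convexification: `[n⁻¹, u]ᵢ₌₁ⁿ → K u` -/
  tendsto_K : ∀ u : X,
    Tendsto (fun n : ℕ => comb (fun _ : Fin n => (n : ℝ)⁻¹) (fun _ => u))
      atTop (nhds (K u))

namespace CCSpace

variable {X : Type} [MetricSpace X] (S : CCSpace X)

/-- The convexifiable domain `K(X)`: the set of convex points. -/
def KX : Set X := {u : X | S.K u = u}

/-- Binary convex combination with weights in `[0,1]`, extended to the endpoints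
by discarding the zero-weight term. -/
noncomputable def comb2 (t : ℝ) (x y : X) : X :=
  if t = 0 then y else if t = 1 then x else S.comb ![t, 1 - t] ![x, y]

/-- Convex combination for nonnegative weights summing to `1`, defined by
discarding the zero-weight terms. -/
noncomputable def combE {n : ℕ} (w : Fin n → ℝ) (u : Fin n → X) : X :=
  letI : DecidablePred fun i : Fin n => w i ≠ 0 := Classical.decPred _
  S.comb (fun j => w ((Fintype.equivFin {i : Fin n // w i ≠ 0}).symm j))
    (fun j => u ((Fintype.equivFin {i : Fin n // w i ≠ 0}).symm j))

/-- A function is affine if it commutes with all convex combinations. -/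
def IsAffine (f : X → ℝ) : Prop :=
  ∀ ⦃n : ℕ⦄ (w : Fin n → ℝ) (x : Fin n → X), (∀ i, 0 < w i) → (∑ i, w i) = 1 →
    f (S.comb w x) = ∑ i, w i * f (x i)

/-- Midpoint convexity. -/
def MidpointConvex (φ : X → ℝ) : Prop :=
  ∀ x y : X, φ (S.comb ![(1 : ℝ) / 2, 1 / 2] ![x, y]) ≤ (φ x + φ y) / 2

end CCSpace


section Aux
variable {X : Type} [MetricSpace X]

private def tailRot (a j : ℕ) : Equiv.Perm (Fin (a + (j + 2))) where
  toFun i := ⟨if i.val < a then i.val else if i.val < a + j then i.val + 2 else i.val - j,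
    by have := i.isLt; split_ifs <;> omega⟩
  invFun i := ⟨if i.val < a then i.val else if i.val < a + 2 then i.val + j else i.val - 2,
    by have := i.isLt; split_ifs <;> omega⟩
  left_inv i := by have := i.isLt; apply Fin.ext; simp only; split_ifs <;> omega
  right_inv i := by have := i.isLt; apply Fin.ext; simp only; split_ifs <;> omega

private lemma sum_if_lt (N c : ℕ) (hc : c ≤ N) (w₁ w₂ : ℝ) :
    ∑ i : Fin N, (if (i : ℕ) < c then w₁ else w₂) = c * w₁ + (N - c : ℕ) * w₂ := by
  rw [Fin.sum_univ_eq_sum_range (fun n => if n < c then w₁ else w₂)]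
  rw [← Finset.sum_range_add_sum_Ico _ hc]
  rw [Finset.sum_congr rfl (fun i hi => if_pos (Finset.mem_range.mp hi)),
    Finset.sum_const, Finset.card_range]
  rw [Finset.sum_congr rfl (fun i hi => if_neg (by simpa using (Finset.mem_Ico.mp hi).1))]
  rw [Finset.sum_const, Nat.card_Ico]
  simp [nsmul_eq_mul]

private lemma comb_congr (S : CCSpace X) {m n : ℕ} (h : m = n) {w : Fin m → ℝ} {u : Fin m → X}
    {w' : Fin n → ℝ} {u' : Fin n → X}
    (hw : ∀ i : Fin m, w i = w' (Fin.cast h i)) (hu : ∀ i : Fin m, u i = u' (Fin.cast h i)) :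
    S.comb w u = S.comb w' u' := by
  subst h
  rw [funext hw, funext hu]
  rfl

private lemma pairing (S : CCSpace X) (x : X) (w : ℝ) (hw : 0 < w) :
    ∀ k j : ℕ, (2 * (k : ℝ) + 2 * (j : ℝ)) * w = 1 →
    S.comb (fun i : Fin (2 * k + j) => if (i : ℕ) < 2 * k then w else 2 * w)
        (fun i : Fin (2 * k + j) =>
          if (i : ℕ) < 2 * k then x else S.comb ![(1 : ℝ) / 2, 1 / 2] ![x, x])
      = S.comb (fun _ : Fin (k + j) => 2 * w)
          (fun _ : Fin (k + j) => S.comb ![(1 : ℝ) / 2, 1 / 2] ![x, x]) := by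
  intro k
  induction k with
  | zero =>
    intro j hj
    exact comb_congr S rfl (fun i => by simp) (fun i => by simp)
  | succ k ih =>
    intro j hj
    set μ := S.comb ![(1 : ℝ) / 2, 1 / 2] ![x, x] with hμ
    -- transport to `Fin (2*k + (j+2))`
    have hN : 2 * (k + 1) + j = 2 * k + (j + 2) := by omega
    set W₁ : Fin (2 * k + (j + 2)) → ℝ :=
      fun i => if (i : ℕ) < 2 * (k + 1) then w else 2 * w with hW₁
    set U₁ : Fin (2 * k + (j + 2)) → X :=
      fun i => if (i : ℕ) < 2 * (k + 1) then x else μ with hU₁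
    have step0 : S.comb
        (fun i : Fin (2 * (k + 1) + j) => if (i : ℕ) < 2 * (k + 1) then w else 2 * w)
        (fun i : Fin (2 * (k + 1) + j) =>
          if (i : ℕ) < 2 * (k + 1) then x else μ) = S.comb W₁ U₁ :=
      comb_congr S hN (fun i => rfl) (fun i => rfl)
    -- positivity and sum for W₁
    have posW₁ : ∀ i, 0 < W₁ i := by
      intro i; simp only [hW₁]; split_ifs <;> linarith
    have sumW₁ : ∑ i, W₁ i = 1 := by
      simp only [hW₁]
      rw [sum_if_lt _ (2 * (k + 1)) (by omega)]
      rw [show 2 * k + (j + 2) - 2 * (k + 1) = j by omega]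
      push_cast
      push_cast at hj
      linear_combination hj
    -- permute: put two `x`'s at the end
    set σ := tailRot (2 * k) j with hσ
    set W₂ : Fin (2 * k + (j + 2)) → ℝ :=
      fun i => if (i : ℕ) < 2 * k then w
        else if (i : ℕ) < 2 * k + j then 2 * w else w with hW₂
    set U₂ : Fin (2 * k + (j + 2)) → X :=
      fun i => if (i : ℕ) < 2 * k then x
        else if (i : ℕ) < 2 * k + j then μ else x with hU₂
    have hfw : W₁ ∘ σ = W₂ := by
      funext i
      have hi := i.isLt
      simp only [hW₁, hW₂, hσ, tailRot, Function.comp_apply, Equiv.coe_fn_mk]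
      split_ifs <;> first | rfl | (exfalso; omega)
    have hfu : U₁ ∘ σ = U₂ := by
      funext i
      have hi := i.isLt
      simp only [hU₁, hU₂, hσ, tailRot, Function.comp_apply, Equiv.coe_fn_mk]
      split_ifs <;> first | rfl | (exfalso; omega)
    have step1 : S.comb W₁ U₁ = S.comb W₂ U₂ := by
      rw [S.comb_perm W₁ U₁ σ posW₁ sumW₁, hfw, hfu]
    -- associativity: combine the last two terms
    have posW₂ : ∀ i, 0 < W₂ i := by
      intro i; simp only [hW₂]; split_ifs <;> linarith
    have sumW₂ : ∑ i, W₂ i = 1 := by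
      rw [← hfw, show ∑ i, (W₁ ∘ σ) i = ∑ i, W₁ i from Equiv.sum_comp σ W₁]
      exact sumW₁
    have step2 := S.comb_assoc (n := 2 * k + j) W₂ U₂ posW₂ sumW₂
    -- evaluate the pieces
    have eW : W₂ ⟨2 * k + j, by omega⟩ = w := by
      simp only [hW₂]
      rw [if_neg (by omega), if_neg (by omega)]
    have eW' : W₂ ⟨2 * k + j + 1, by omega⟩ = w := by
      simp only [hW₂]
      rw [if_neg (by omega), if_neg (by omega)]
    have eU : U₂ ⟨2 * k + j, by omega⟩ = x := by
      simp only [hU₂]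
      rw [if_neg (by omega), if_neg (by omega)]
    have eU' : U₂ ⟨2 * k + j + 1, by omega⟩ = x := by
      simp only [hU₂]
      rw [if_neg (by omega), if_neg (by omega)]
    have hhalf : w / (w + w) = 1 / 2 := by
      rw [div_eq_div_iff (by linarith) (by norm_num)]
      ring
    set W₃ : Fin (2 * k + (j + 1)) → ℝ :=
      fun i => if (i : ℕ) < 2 * k then w else 2 * w with hW₃
    set U₃ : Fin (2 * k + (j + 1)) → X :=
      fun i => if (i : ℕ) < 2 * k then x else μ with hU₃
    have step3 : S.comb W₂ U₂ = S.comb W₃ U₃ := by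
      rw [step2]
      congr 1
      · funext i
        refine Fin.lastCases ?_ ?_ i
        · rw [Fin.snoc_last, eW, eW']
          simp only [hW₃]
          rw [if_neg (by simp only [Fin.val_last]; omega)]
          ring
        · intro i
          rw [Fin.snoc_castSucc]
          have hi := i.isLt
          simp only [hW₂, hW₃, Fin.coe_castLE, Fin.coe_castSucc]
          split_ifs <;> first | rfl | (exfalso; omega)
      · funext i
        refine Fin.lastCases ?_ ?_ i
        · rw [Fin.snoc_last, eW, eW', eU, eU', hhalf]
          simp only [hU₃]
          rw [if_neg (by simp only [Fin.val_last]; omega)]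
        · intro i
          rw [Fin.snoc_castSucc]
          have hi := i.isLt
          simp only [hU₂, hU₃, Fin.coe_castLE, Fin.coe_castSucc]
          split_ifs <;> first | rfl | (exfalso; omega)
    have step4 : S.comb W₃ U₃ = S.comb (fun _ : Fin (k + (j + 1)) => 2 * w)
        (fun _ : Fin (k + (j + 1)) => μ) := by
      apply ih (j + 1)
      push_cast
      push_cast at hj
      linear_combination hj
    have step5 : S.comb (fun _ : Fin (k + (j + 1)) => 2 * w)
        (fun _ : Fin (k + (j + 1)) => μ)
        = S.comb (fun _ : Fin ((k + 1) + j) => 2 * w)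
          (fun _ : Fin ((k + 1) + j) => μ) :=
      comb_congr S (by omega) (fun i => rfl) (fun i => rfl)
    rw [step0, step1, step3, step4, step5]


private lemma uniform_pow_le (S : CCSpace X) (φ : X → ℝ) (hmc : S.MidpointConvex φ) :
    ∀ (m : ℕ) (x : X),
      φ (S.comb (fun _ : Fin (2 ^ m) => ((2 ^ m : ℕ) : ℝ)⁻¹) (fun _ => x)) ≤ φ x := by
  intro m
  induction m with
  | zero =>
    intro x
    have h1 : S.comb (fun _ : Fin (2 ^ 0) => ((2 ^ 0 : ℕ) : ℝ)⁻¹) (fun _ => x)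
        = S.comb (fun _ : Fin 1 => (1 : ℝ)) (fun _ => x) :=
      comb_congr S rfl (fun i => by norm_num) (fun i => rfl)
    rw [h1, S.comb_single]
  | succ m ih =>
    intro x
    set μ := S.comb ![(1 : ℝ) / 2, 1 / 2] ![x, x] with hμ
    set w : ℝ := ((2 ^ (m + 1) : ℕ) : ℝ)⁻¹ with hwdef
    have hw : (0 : ℝ) < w := by positivity
    have hN : 2 ^ (m + 1) = 2 * 2 ^ m + 0 := by rw [pow_succ]; ring
    have key := pairing S x w hw (2 ^ m) 0
      (by rw [hwdef]; push_cast; rw [pow_succ]; field_simp; ring)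
    have e1 : S.comb (fun _ : Fin (2 ^ (m + 1)) => w) (fun _ => x)
        = S.comb
          (fun i : Fin (2 * 2 ^ m + 0) => if (i : ℕ) < 2 * 2 ^ m then w else 2 * w)
          (fun i : Fin (2 * 2 ^ m + 0) =>
            if (i : ℕ) < 2 * 2 ^ m then x else μ) := by
      refine comb_congr S hN (fun i => ?_) (fun i => ?_) <;>
      · have hi : ((Fin.cast hN i : Fin (2 * 2 ^ m + 0)) : ℕ) < 2 * 2 ^ m := by
          have := (Fin.cast hN i).isLt
          simpa using this
        rw [if_pos hi]
    have e2 : S.comb (fun _ : Fin (2 ^ m + 0) => 2 * w) (fun _ => μ)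
        = S.comb (fun _ : Fin (2 ^ m) => ((2 ^ m : ℕ) : ℝ)⁻¹) (fun _ => μ) := by
      refine comb_congr S (by omega) (fun i => ?_) (fun i => rfl)
      rw [hwdef]
      push_cast
      rw [pow_succ]
      rw [mul_inv]
      field_simp
    have step : φ (S.comb (fun _ : Fin (2 ^ (m + 1)) => w) (fun _ => x)) ≤ φ μ := by
      rw [e1, key, e2]; exact ih μ
    have hmid : φ μ ≤ φ x := by
      have := hmc x x
      rw [← hμ] at this
      linarith
    exact step.trans hmid

end Aux

/-- If `φ` is midpoint convex and lower semicontinuous on a CC space, then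
`φ(Kx) ≤ φ(x)` for every `x`. -/
theorem stmt11 {X : Type} [MetricSpace X] (S : CCSpace X) (φ : X → ℝ)
    (hmc : S.MidpointConvex φ) (hlsc : LowerSemicontinuous φ) (x : X) :
    φ (S.K x) ≤ φ x := by
  by_contra h
  push_neg at h
  have h2 : Tendsto (fun m : ℕ => 2 ^ m) atTop atTop :=
    tendsto_pow_atTop_atTop_of_one_lt (by norm_num)
  have hseq : Tendsto
      (fun m : ℕ => S.comb (fun _ : Fin (2 ^ m) => ((2 ^ m : ℕ) : ℝ)⁻¹)
        (fun _ : Fin (2 ^ m) => x)) atTop (nhds (S.K x)) :=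
    (S.tendsto_K x).comp h2
  have hev := hseq.eventually (hlsc (S.K x) (φ x) h)
  obtain ⟨m, hm⟩ := hev.exists
  exact absurd (uniform_pow_le S φ hmc m x) (not_le.mpr hm)
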